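/- Fix x ≥ 0 with f(x) > 0 and set γ = ∫₀ˣ f(t) dt. For every measurable function g : [x, ∞) → ℝ with 0 ≤ g(t) ≤ f(x) for all t ≥ x and ∫ₓ^∞ g(t) dt = 1/2 − γ, one has ∫ₓ^∞ t g(t) dt ≥ x(1/2 − γ) + (1/(2 f(x)))(γ² − γ + 1/4); equality is attained by the function u(t) = f(x) for x ≤ t ≤ x + (1/f(x))(1/2 − γ) and u(t) = 0 otherwise. -/

import Mathlib

open MeasureTheory
set_option maxHeartbeats 1000000

/-- Fix `x ≥ 0` with `f x > 0` and set `γ = ∫₀ˣ f`.  Every measurable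
`g` with `0 ≤ g ≤ f x` on `[x, ∞)` and `∫ₓ^∞ g = 1/2 − γ` satisfies
`∫ₓ^∞ t g(t) dt ≥ x(1/2 − γ) + (γ² − γ + 1/4)/(2 f x)`, and equality is
attained by `u(t) = f x` for `x ≤ t ≤ x + (1/2 − γ)/f x`, `u(t) = 0` otherwise. -/
theorem le_integral_mul_of_bounded
    (f : ℝ → ℝ) (hf_nonneg : ∀ t, 0 ≤ t → 0 ≤ f t)
    (hf_mono : ∀ x y : ℝ, 0 ≤ x → x ≤ y → f y ≤ f x)
    (hf_int : IntegrableOn f (Set.Ioi 0))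
    (hf_total : (∫ t in Set.Ioi (0:ℝ), f t) = 1 / 2)
    (hf_mom : IntegrableOn (fun t => t * f t) (Set.Ioi 0))
    (x : ℝ) (hx : 0 ≤ x) (hfx : 0 < f x)
    (γ : ℝ) (hγ : γ = ∫ t in (0:ℝ)..x, f t) :
    (∀ g : ℝ → ℝ, Measurable g →
        (∀ t, x ≤ t → 0 ≤ g t ∧ g t ≤ f x) →
        IntegrableOn g (Set.Ioi x) →
        (∫ t in Set.Ioi x, g t) = 1 / 2 - γ →
        IntegrableOn (fun t => t * g t) (Set.Ioi x) →
        x * (1 / 2 - γ) + (1 / (2 * f x)) * (γ ^ 2 - γ + 1 / 4)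
          ≤ ∫ t in Set.Ioi x, t * g t)
      ∧ (∫ t in Set.Ioi x,
            t * (if x ≤ t ∧ t ≤ x + (1 / f x) * (1 / 2 - γ) then f x else 0))
          = x * (1 / 2 - γ) + (1 / (2 * f x)) * (γ ^ 2 - γ + 1 / 4) := by
  have hcne : f x ≠ 0 := ne_of_gt hfx
  -- γ ≤ 1/2
  have hfIoc : IntegrableOn f (Set.Ioc 0 x) := hf_int.mono_set Set.Ioc_subset_Ioi_self
  have hfIoi : IntegrableOn f (Set.Ioi x) := hf_int.mono_set (Set.Ioi_subset_Ioi hx)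
  have hdisj : Disjoint (Set.Ioc 0 x) (Set.Ioi x) := by
    rw [Set.disjoint_left]; intro t ht ht'; exact absurd ht.2 (not_le.mpr ht')
  have hsplit : (∫ t in Set.Ioc 0 x, f t) + (∫ t in Set.Ioi x, f t) = 1/2 := by
    rw [← hf_total, ← setIntegral_union hdisj measurableSet_Ioi hfIoc hfIoi,
      Set.Ioc_union_Ioi_eq_Ioi hx]
  have hγeq : γ = ∫ t in Set.Ioc 0 x, f t := hγ.trans (intervalIntegral.integral_of_le hx)
  have htail : 0 ≤ ∫ t in Set.Ioi x, f t :=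
    setIntegral_nonneg measurableSet_Ioi (fun t ht => hf_nonneg t (hx.trans (le_of_lt ht)))
  have hM : 0 ≤ 1/2 - γ := by rw [hγeq]; linarith
  set b : ℝ := x + (1 / f x) * (1/2 - γ) with hbdef
  have hxb : x ≤ b := by
    have h0 : 0 ≤ (1 / f x) * (1/2 - γ) := mul_nonneg (by positivity) hM
    rw [hbdef]; linarith
  -- u and its integrals
  set u : ℝ → ℝ := fun t => if x ≤ t ∧ t ≤ b then f x else 0 with hudef
  have hEq1 : Set.EqOn u ((Set.Ioc x b).indicator (fun _ => f x)) (Set.Ioi x) := by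
    intro t ht
    have ht' : x < t := ht
    have hxt : x ≤ t := le_of_lt ht'
    by_cases h : t ≤ b
    · simp [hudef, Set.indicator, Set.mem_Ioc, h, hxt, ht']
    · simp [hudef, Set.indicator, Set.mem_Ioc, h, hxt]
  have hEq2 : Set.EqOn (fun t => t * u t) ((Set.Ioc x b).indicator (fun t => t * f x))
      (Set.Ioi x) := by
    intro t ht
    have ht' : x < t := ht
    have hxt : x ≤ t := le_of_lt ht'
    by_cases h : t ≤ b
    · simp [hudef, Set.indicator, Set.mem_Ioc, h, hxt, ht']
    · simp [hudef, Set.indicator, Set.mem_Ioc, h, hxt]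
  have hind1 : IntegrableOn ((Set.Ioc x b).indicator (fun _ : ℝ => f x)) (Set.Ioi x) := by
    have h1 : IntegrableOn (fun _ : ℝ => f x) (Set.Ioc x b) :=
      integrableOn_const measure_Ioc_lt_top.ne
    exact (h1.integrable_indicator measurableSet_Ioc).integrableOn
  have hind2 : IntegrableOn ((Set.Ioc x b).indicator (fun t : ℝ => t * f x)) (Set.Ioi x) := by
    have h1 : IntegrableOn (fun t : ℝ => t * f x) (Set.Ioc x b) :=
      (continuous_id.mul continuous_const).integrableOn_Ioc
    exact (h1.integrable_indicator measurableSet_Ioc).integrableOn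
  have hu_int : IntegrableOn u (Set.Ioi x) := (hind1.congr_fun hEq1.symm measurableSet_Ioi)
  have hut_int : IntegrableOn (fun t => t * u t) (Set.Ioi x) :=
    (hind2.congr_fun hEq2.symm measurableSet_Ioi)
  have hu_sum : (∫ t in Set.Ioi x, u t) = 1/2 - γ := by
    rw [setIntegral_congr_fun measurableSet_Ioi hEq1,
      setIntegral_indicator measurableSet_Ioc,
      Set.inter_comm, Set.inter_eq_self_of_subset_left Set.Ioc_subset_Ioi_self,
      ← intervalIntegral.integral_of_le hxb, intervalIntegral.integral_const]
    simp only [hbdef, smul_eq_mul]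
    field_simp
    ring
  have hut_val : (∫ t in Set.Ioi x, t * u t)
      = x * (1/2 - γ) + (1 / (2 * f x)) * (γ^2 - γ + 1/4) := by
    rw [setIntegral_congr_fun measurableSet_Ioi hEq2,
      setIntegral_indicator measurableSet_Ioc,
      Set.inter_comm, Set.inter_eq_self_of_subset_left Set.Ioc_subset_Ioi_self,
      ← intervalIntegral.integral_of_le hxb, intervalIntegral.integral_mul_const,
      integral_id]
    simp only [hbdef]
    field_simp
    ring
  constructor
  · intro g hg hgb hgint hgsum hgtint
    have key : 0 ≤ ∫ t in Set.Ioi x, (t - b) * (g t - u t) := by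
      apply setIntegral_nonneg measurableSet_Ioi
      intro t ht
      have hxt : x ≤ t := le_of_lt ht
      rcases le_or_gt t b with h | h
      · have hu : u t = f x := by simp [hudef, hxt, h]
        have := (hgb t hxt).2
        nlinarith
      · have hu : u t = 0 := by simp [hudef, not_le.mpr h]
        have := (hgb t hxt).1
        nlinarith
    have hexp : ∀ t : ℝ, (t - b) * (g t - u t)
        = (t * g t - t * u t) - (b * g t - b * u t) := by intro t; ring
    have hint : (∫ t in Set.Ioi x, (t - b) * (g t - u t))
        = (∫ t in Set.Ioi x, t * g t) - (∫ t in Set.Ioi x, t * u t)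
          - (b * (∫ t in Set.Ioi x, g t) - b * (∫ t in Set.Ioi x, u t)) := by
      have i1 : IntegrableOn (fun t => t * g t - t * u t) (Set.Ioi x) := hgtint.sub hut_int
      have i2 : IntegrableOn (fun t => b * g t - b * u t) (Set.Ioi x) :=
        (hgint.const_mul b).sub (hu_int.const_mul b)
      have i3 : IntegrableOn (fun t => b * g t) (Set.Ioi x) := hgint.const_mul b
      have i4 : IntegrableOn (fun t => b * u t) (Set.Ioi x) := hu_int.const_mul b
      simp_rw [hexp]
      rw [integral_sub i1 i2, integral_sub hgtint hut_int, integral_sub i3 i4,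
        integral_const_mul, integral_const_mul]
    rw [hint, hgsum, hu_sum, hut_val] at key
    linarith
  · exact hut_val
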